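/- Shift relation for the shift (e₁,e₆) → (e₁+1,e₆+1) of the equation E₃f: let P = x(x−1)²∂² + (x−1)((e₅+e₆+1)x+e₁−1)∂ + e₅e₆x − e₁/2 − e₆/2 + e₁²/2 + e₁e₃/2 + e₅e₁/2 + e₆e₁ + e₆e₃/2 − e₅e₆/2 + e₆²/2, and Q = x(x−1)²∂² + (x−1)((e₅+e₆+2)x+e₁)∂ + (e₅e₆+e₅)x + e₁²/2 + e₁e₃/2 + e₅e₁/2 + e₆e₁ + e₆e₃/2 − e₅e₆/2 + e₆²/2 + e₁/2 + e₆/2. Then for every function u holomorphic on an open set U ⊆ ℂ∖{0,1} and every x ∈ U, (E₃f(e₁+1,e₃,e₅,e₆+1)(P u))(x) = (Q (E₃f(e₁,e₃,e₅,e₆) u))(x). -/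

import Mathlib

/-!
STATEMENT 19: Shift relation for the shift (e₁,e₆) → (e₁+1,e₆+1) of the
equation E₃f(e₁,e₃,e₅,e₆) := E₃(e₁, −e₁−e₃−e₅+1, e₃, e₃−e₅+1, e₅, e₆):
E₃f(e₁+1,e₃,e₅,e₆+1) ∘ P = Q ∘ E₃f(e₁,e₃,e₅,e₆).
-/

/-- The accessory parameter A₀₀(e₁,…,e₆) of the equation E₃,
with e₇ := 3 − (e₁+⋯+e₆). -/
noncomputable def A00 (e1 e2 e3 e4 e5 e6 : ℂ) : ℂ :=
  let e7 := 3 - (e1 + e2 + e3 + e4 + e5 + e6)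
  (-4*(e1 + e2 - e3 - e4)^3 - 27*e5*e6*e7
    + 9*(e1 + e2 - e3 - e4)*(e5*e6 + e5*e7 + e6*e7 - 2)
    + 9*e1*e2*(e1 + e2 - 1) + 18*(e1 + e2 - 1)*(e3^2 + e3*e4 + e4^2)
    - 9*e3*e4*(e3 + e4 - 1) - 18*(e3 + e4 - 1)*(e1^2 + e1*e2 + e2^2)) / 54

/-- Coefficient of ∂³ of E₃. -/
noncomputable def E3c3 (x : ℂ) : ℂ := x^2*(x - 1)^2

/-- Coefficient of ∂² of E₃. -/
noncomputable def E3c2 (e1 e2 e3 e4 e5 e6 : ℂ) (x : ℂ) : ℂ :=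
  x*(x - 1)*((6 - e1 - e2 - e3 - e4)*x + e1 + e2 - 3)

/-- Coefficient of ∂ of E₃. -/
noncomputable def E3c1 (e1 e2 e3 e4 e5 e6 : ℂ) (x : ℂ) : ℂ :=
  let e7 := 3 - (e1 + e2 + e3 + e4 + e5 + e6)
  ((e5 + e6 + 1)*e7 + (e6 + 1)*(e5 + 1)) * x^2
  + (-(e5 + e6)*e7 - e1*e2 + e3*e4 - e5*e6 + 2*e1 + 2*e2 - 4) * x
  + (e1 - 1)*(e2 - 1)

/-- Coefficient of 1 of E₃. -/
noncomputable def E3c0 (e1 e2 e3 e4 e5 e6 : ℂ) (x : ℂ) : ℂ :=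
  let e7 := 3 - (e1 + e2 + e3 + e4 + e5 + e6)
  (e5*e6*e7) * x + A00 e1 e2 e3 e4 e5 e6

/-- The operator E₃(e₁,…,e₆) acting on a function u. -/
noncomputable def E3op (e1 e2 e3 e4 e5 e6 : ℂ) (u : ℂ → ℂ) : ℂ → ℂ := fun x =>
  E3c3 x * iteratedDeriv 3 u x + E3c2 e1 e2 e3 e4 e5 e6 x * iteratedDeriv 2 u x
    + E3c1 e1 e2 e3 e4 e5 e6 x * deriv u x + E3c0 e1 e2 e3 e4 e5 e6 x * u x

/-- The operator E₃f(e₁,e₃,e₅,e₆) := E₃(e₁, −e₁−e₃−e₅+1, e₃, e₃−e₅+1, e₅, e₆). -/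
noncomputable def E3fop (e1 e3 e5 e6 : ℂ) (u : ℂ → ℂ) : ℂ → ℂ :=
  E3op e1 (-e1 - e3 - e5 + 1) e3 (e3 - e5 + 1) e5 e6 u

/-- The shift operator P for (e₁,e₆) → (e₁+1,e₆+1) acting on a function u. -/
noncomputable def Pf (e1 e3 e5 e6 : ℂ) (u : ℂ → ℂ) : ℂ → ℂ := fun x =>
  x*(x - 1)^2 * iteratedDeriv 2 u x
  + (x - 1)*((e5 + e6 + 1)*x + e1 - 1) * deriv u x
  + (e5*e6*x - e1/2 - e6/2 + e1^2/2 + e1*e3/2 + e5*e1/2 + e6*e1 + e6*e3/2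
      - e5*e6/2 + e6^2/2) * u x

/-- The shift operator Q for (e₁,e₆) → (e₁+1,e₆+1) acting on a function u. -/
noncomputable def Qf (e1 e3 e5 e6 : ℂ) (u : ℂ → ℂ) : ℂ → ℂ := fun x =>
  x*(x - 1)^2 * iteratedDeriv 2 u x
  + (x - 1)*((e5 + e6 + 2)*x + e1) * deriv u x
  + ((e5*e6 + e5)*x + e1^2/2 + e1*e3/2 + e5*e1/2 + e6*e1 + e6*e3/2
      - e5*e6/2 + e6^2/2 + e1/2 + e6/2) * u x


lemma hasDerivAt_poly (a b c d e y : ℂ) :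
    HasDerivAt (fun t : ℂ => a*t^4 + b*t^3 + c*t^2 + d*t + e)
      (4*a*y^3 + 3*b*y^2 + 2*c*y + d) y := by
  have h := ((((((hasDerivAt_pow 4 y).const_mul a).add ((hasDerivAt_pow 3 y).const_mul b)).add
      ((hasDerivAt_pow 2 y).const_mul c)).add ((hasDerivAt_id y).const_mul d)).add_const e)
  refine h.congr_deriv ?_
  push_cast; ring

lemma hasDerivAt_term (a b c d e : ℂ) {f : ℂ → ℂ} {v : ℂ} {y : ℂ}
    (hf : HasDerivAt f v y) {w : ℂ}
    (hw : w = (4*a*y^3 + 3*b*y^2 + 2*c*y + d) * f y + (a*y^4 + b*y^3 + c*y^2 + d*y + e) * v) :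
    HasDerivAt (fun t : ℂ => (a*t^4 + b*t^3 + c*t^2 + d*t + e) * f t) w y := by
  subst hw
  exact (hasDerivAt_poly a b c d e y).mul hf

lemma itd2_eq (f : ℂ → ℂ) : iteratedDeriv 2 f = deriv (deriv f) := by
  rw [show (2:ℕ) = 1 + 1 from rfl, iteratedDeriv_succ, iteratedDeriv_one]

lemma itd3_eq (f : ℂ → ℂ) : iteratedDeriv 3 f = deriv (deriv (deriv f)) := by
  rw [show (3:ℕ) = 2 + 1 from rfl, iteratedDeriv_succ, itd2_eq]

set_option maxHeartbeats 4000000 in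
theorem E3f_shift (e1 e3 e5 e6 : ℂ) (U : Set ℂ) (hU : IsOpen U)
    (hU0 : (0 : ℂ) ∉ U) (hU1 : (1 : ℂ) ∉ U)
    (u : ℂ → ℂ) (hu : DifferentiableOn ℂ u U) (x : ℂ) (hx : x ∈ U) :
    E3fop (e1 + 1) e3 e5 (e6 + 1) (Pf e1 e3 e5 e6 u) x
      = Qf e1 e3 e5 e6 (E3fop e1 e3 e5 e6 u) x := by
  have hA : AnalyticOnNhd ℂ u U := hu.analyticOnNhd hU
  have hAn : ∀ n, AnalyticOnNhd ℂ (iteratedDeriv n u) U := by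
    intro n; induction n with
    | zero => rw [iteratedDeriv_zero]; exact hA
    | succ n ih => rw [iteratedDeriv_succ]; exact ih.deriv
  have key : ∀ n, ∀ y ∈ U, HasDerivAt (iteratedDeriv n u) (iteratedDeriv (n+1) u y) y := by
    intro n y hy
    have h := ((hAn n) y hy).differentiableAt.hasDerivAt
    rw [iteratedDeriv_succ]; exact h
  have hd0 : ∀ y ∈ U, HasDerivAt u (deriv u y) y :=
    fun y hy => ((hA y hy).differentiableAt).hasDerivAt
  have hd1 : ∀ y ∈ U, HasDerivAt (deriv u) (iteratedDeriv 2 u y) y := by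
    intro y hy; have h := key 1 y hy; rwa [iteratedDeriv_one] at h
  have hd2 : ∀ y ∈ U, HasDerivAt (iteratedDeriv 2 u) (iteratedDeriv 3 u y) y :=
    fun y hy => key 2 y hy
  have hd3 : ∀ y ∈ U, HasDerivAt (iteratedDeriv 3 u) (iteratedDeriv 4 u y) y :=
    fun y hy => key 3 y hy
  have hd4 : ∀ y ∈ U, HasDerivAt (iteratedDeriv 4 u) (iteratedDeriv 5 u y) y :=
    fun y hy => key 4 y hy
  have hd5 : ∀ y ∈ U, HasDerivAt (iteratedDeriv 5 u) (iteratedDeriv 6 u y) y :=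
    fun y hy => key 5 y hy
  have hPfun : Pf e1 e3 e5 e6 u = fun y : ℂ => ((0)*y^4 + ((1))*y^3 + ((-2))*y^2 + ((1))*y + (0)) * (iteratedDeriv 2 u y) + ((0)*y^4 + (0)*y^3 + ((1) + (1)*e6 + (1)*e5)*y^2 + ((-2) + (-1)*e6 + (-1)*e5 + (1)*e1)*y + ((1) + (-1)*e1)) * (deriv u y) + ((0)*y^4 + (0)*y^3 + (0)*y^2 + ((1)*e5*e6)*y + ((-1/2)*e6 + (1/2)*e6^2 + (-1/2)*e5*e6 + (1/2)*e3*e6 + (-1/2)*e1 + (1)*e1*e6 + (1/2)*e1*e5 + (1/2)*e1*e3 + (1/2)*e1^2)) * (u y) := by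
    funext y; simp only [Pf]; ring
  have hP1 : ∀ y ∈ U, HasDerivAt (Pf e1 e3 e5 e6 u)
      (((4*(0)*y^3 + 3*((1))*y^2 + 2*((-2))*y + ((1))) * iteratedDeriv 2 u y + ((0)*y^4 + ((1))*y^3 + ((-2))*y^2 + ((1))*y + (0)) * iteratedDeriv 3 u y) + ((4*(0)*y^3 + 3*(0)*y^2 + 2*((1) + (1)*e6 + (1)*e5)*y + ((-2) + (-1)*e6 + (-1)*e5 + (1)*e1)) * deriv u y + ((0)*y^4 + (0)*y^3 + ((1) + (1)*e6 + (1)*e5)*y^2 + ((-2) + (-1)*e6 + (-1)*e5 + (1)*e1)*y + ((1) + (-1)*e1)) * iteratedDeriv 2 u y) + ((4*(0)*y^3 + 3*(0)*y^2 + 2*(0)*y + ((1)*e5*e6)) * u y + ((0)*y^4 + (0)*y^3 + (0)*y^2 + ((1)*e5*e6)*y + ((-1/2)*e6 + (1/2)*e6^2 + (-1/2)*e5*e6 + (1/2)*e3*e6 + (-1/2)*e1 + (1)*e1*e6 + (1/2)*e1*e5 + (1/2)*e1*e3 + (1/2)*e1^2)) * deriv u y)) y := by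
    intro y hy
    rw [hPfun]
    exact (((hasDerivAt_term (0) ((1)) ((-2)) ((1)) (0) (hd2 y hy) rfl).add (hasDerivAt_term (0) (0) ((1) + (1)*e6 + (1)*e5) ((-2) + (-1)*e6 + (-1)*e5 + (1)*e1) ((1) + (-1)*e1) (hd1 y hy) rfl)).add (hasDerivAt_term (0) (0) (0) ((1)*e5*e6) ((-1/2)*e6 + (1/2)*e6^2 + (-1/2)*e5*e6 + (1/2)*e3*e6 + (-1/2)*e1 + (1)*e1*e6 + (1/2)*e1*e5 + (1/2)*e1*e3 + (1/2)*e1^2) (hd0 y hy) rfl))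
  have hP2 : ∀ y ∈ U, HasDerivAt (deriv (Pf e1 e3 e5 e6 u))
      (((4*(0)*y^3 + 3*((1))*y^2 + 2*((-2))*y + ((1))) * iteratedDeriv 3 u y + ((0)*y^4 + ((1))*y^3 + ((-2))*y^2 + ((1))*y + (0)) * iteratedDeriv 4 u y) + ((4*(0)*y^3 + 3*(0)*y^2 + 2*((4) + (1)*e6 + (1)*e5)*y + ((-6) + (-1)*e6 + (-1)*e5 + (1)*e1)) * iteratedDeriv 2 u y + ((0)*y^4 + (0)*y^3 + ((4) + (1)*e6 + (1)*e5)*y^2 + ((-6) + (-1)*e6 + (-1)*e5 + (1)*e1)*y + ((2) + (-1)*e1)) * iteratedDeriv 3 u y) + ((4*(0)*y^3 + 3*(0)*y^2 + 2*(0)*y + ((2) + (2)*e6 + (2)*e5 + (1)*e5*e6)) * deriv u y + ((0)*y^4 + (0)*y^3 + (0)*y^2 + ((2) + (2)*e6 + (2)*e5 + (1)*e5*e6)*y + ((-2) + (-3/2)*e6 + (1/2)*e6^2 + (-1)*e5 + (-1/2)*e5*e6 + (1/2)*e3*e6 + (1/2)*e1 + (1)*e1*e6 + (1/2)*e1*e5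 + (1/2)*e1*e3 + (1/2)*e1^2)) * iteratedDeriv 2 u y) + ((4*(0)*y^3 + 3*(0)*y^2 + 2*(0)*y + (0)) * u y + ((0)*y^4 + (0)*y^3 + (0)*y^2 + (0)*y + ((1)*e5*e6)) * deriv u y)) y := by
    intro y hy
    have hcan : HasDerivAt (fun t : ℂ => ((0)*t^4 + ((1))*t^3 + ((-2))*t^2 + ((1))*t + (0)) * (iteratedDeriv 3 u t) + ((0)*t^4 + (0)*t^3 + ((4) + (1)*e6 + (1)*e5)*t^2 + ((-6) + (-1)*e6 + (-1)*e5 + (1)*e1)*t + ((2) + (-1)*e1)) * (iteratedDeriv 2 u t) + ((0)*t^4 + (0)*t^3 + (0)*t^2 + ((2) + (2)*e6 + (2)*e5 + (1)*e5*e6)*t + ((-2) + (-3/2)*e6 + (1/2)*e6^2 + (-1)*e5 + (-1/2)*e5*e6 + (1/2)*e3*e6 + (1/2)*e1 + (1)*e1*e6 + (1/2)*e1*e5 + (1/2)*e1*e3 + (1/2)*e1^2)) * (deriv u t) + ((0)*t^4 + (0)*t^3 + (0)*t^2 + (0)*t + ((1)*e5*e6)) * (u t))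
      (((4*(0)*y^3 + 3*((1))*y^2 + 2*((-2))*y + ((1))) * iteratedDeriv 3 u y + ((0)*y^4 + ((1))*y^3 + ((-2))*y^2 + ((1))*y + (0)) * iteratedDeriv 4 u y) + ((4*(0)*y^3 + 3*(0)*y^2 + 2*((4) + (1)*e6 + (1)*e5)*y + ((-6) + (-1)*e6 + (-1)*e5 + (1)*e1)) * iteratedDeriv 2 u y + ((0)*y^4 + (0)*y^3 + ((4) + (1)*e6 + (1)*e5)*y^2 + ((-6) + (-1)*e6 + (-1)*e5 + (1)*e1)*y + ((2) + (-1)*e1)) * iteratedDeriv 3 u y) + ((4*(0)*y^3 + 3*(0)*y^2 + 2*(0)*y + ((2) + (2)*e6 + (2)*e5 + (1)*e5*e6)) * deriv u y + ((0)*y^4 + (0)*y^3 + (0)*y^2 + ((2) + (2)*e6 + (2)*e5 + (1)*e5*e6)*y + ((-2) + (-3/2)*e6 + (1/2)*e6^2 + (-1)*e5 + (-1/2)*e5*e6 + (1/2)*e3*e6 + (1/2)*e1 + (1)*e1*e6 + (1/2)*e1*e5 + (1/2)*e1*e3 + (1/2)*e1^2)) * iteratedDeriv 2 u y) + ((4*(0)*y^3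 + 3*(0)*y^2 + 2*(0)*y + (0)) * u y + ((0)*y^4 + (0)*y^3 + (0)*y^2 + (0)*y + ((1)*e5*e6)) * deriv u y)) y :=
      ((((hasDerivAt_term (0) ((1)) ((-2)) ((1)) (0) (hd3 y hy) rfl).add (hasDerivAt_term (0) (0) ((4) + (1)*e6 + (1)*e5) ((-6) + (-1)*e6 + (-1)*e5 + (1)*e1) ((2) + (-1)*e1) (hd2 y hy) rfl)).add (hasDerivAt_term (0) (0) (0) ((2) + (2)*e6 + (2)*e5 + (1)*e5*e6) ((-2) + (-3/2)*e6 + (1/2)*e6^2 + (-1)*e5 + (-1/2)*e5*e6 + (1/2)*e3*e6 + (1/2)*e1 + (1)*e1*e6 + (1/2)*e1*e5 + (1/2)*e1*e3 + (1/2)*e1^2) (hd1 y hy) rfl)).add (hasDerivAt_term (0) (0) (0) (0) ((1)*e5*e6) (hd0 y hy) rfl))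
    refine hcan.congr_of_eventuallyEq ?_
    filter_upwards [hU.mem_nhds hy] with z hz
    have hz1 := (hP1 z hz).deriv
    beta_reduce
    rw [hz1]; ring
  have hP3 : ∀ y ∈ U, HasDerivAt (deriv (deriv (Pf e1 e3 e5 e6 u)))
      (((4*(0)*y^3 + 3*((1))*y^2 + 2*((-2))*y + ((1))) * iteratedDeriv 4 u y + ((0)*y^4 + ((1))*y^3 + ((-2))*y^2 + ((1))*y + (0)) * iteratedDeriv 5 u y) + ((4*(0)*y^3 + 3*(0)*y^2 + 2*((7) + (1)*e6 + (1)*e5)*y + ((-10) + (-1)*e6 + (-1)*e5 + (1)*e1)) * iteratedDeriv 3 u y + ((0)*y^4 + (0)*y^3 + ((7) + (1)*e6 + (1)*e5)*y^2 + ((-10) + (-1)*e6 + (-1)*e5 + (1)*e1)*y + ((3) + (-1)*e1)) * iteratedDeriv 4 u y) + ((4*(0)*y^3 + 3*(0)*y^2 + 2*(0)*y + ((10) + (4)*e6 + (4)*e5 + (1)*e5*e6)) * iteratedDeriv 2 u y + ((0)*y^4 + (0)*y^3 + (0)*y^2 + ((10) + (4)*e6 + (4)*e5 + (1)*e5*e6)*y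 + ((-8) + (-5/2)*e6 + (1/2)*e6^2 + (-2)*e5 + (-1/2)*e5*e6 + (1/2)*e3*e6 + (3/2)*e1 + (1)*e1*e6 + (1/2)*e1*e5 + (1/2)*e1*e3 + (1/2)*e1^2)) * iteratedDeriv 3 u y) + ((4*(0)*y^3 + 3*(0)*y^2 + 2*(0)*y + (0)) * deriv u y + ((0)*y^4 + (0)*y^3 + (0)*y^2 + (0)*y + ((2) + (2)*e6 + (2)*e5 + (2)*e5*e6)) * iteratedDeriv 2 u y)) y := by
    intro y hy
    have hcan : HasDerivAt (fun t : ℂ => ((0)*t^4 + ((1))*t^3 + ((-2))*t^2 + ((1))*t + (0)) * (iteratedDeriv 4 u t) + ((0)*t^4 + (0)*t^3 + ((7) + (1)*e6 + (1)*e5)*t^2 + ((-10) + (-1)*e6 + (-1)*e5 + (1)*e1)*t + ((3) + (-1)*e1)) * (iteratedDeriv 3 u t) + ((0)*t^4 + (0)*t^3 + (0)*t^2 + ((10) + (4)*e6 + (4)*e5 + (1)*e5*e6)*t + ((-8) + (-5/2)*e6 + (1/2)*e6^2 + (-2)*e5 + (-1/2)*e5*e6 + (1/2)*e3*e6 + (3/2)*e1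 + (1)*e1*e6 + (1/2)*e1*e5 + (1/2)*e1*e3 + (1/2)*e1^2)) * (iteratedDeriv 2 u t) + ((0)*t^4 + (0)*t^3 + (0)*t^2 + (0)*t + ((2) + (2)*e6 + (2)*e5 + (2)*e5*e6)) * (deriv u t))
      (((4*(0)*y^3 + 3*((1))*y^2 + 2*((-2))*y + ((1))) * iteratedDeriv 4 u y + ((0)*y^4 + ((1))*y^3 + ((-2))*y^2 + ((1))*y + (0)) * iteratedDeriv 5 u y) + ((4*(0)*y^3 + 3*(0)*y^2 + 2*((7) + (1)*e6 + (1)*e5)*y + ((-10) + (-1)*e6 + (-1)*e5 + (1)*e1)) * iteratedDeriv 3 u y + ((0)*y^4 + (0)*y^3 + ((7) + (1)*e6 + (1)*e5)*y^2 + ((-10) + (-1)*e6 + (-1)*e5 + (1)*e1)*y + ((3) + (-1)*e1)) * iteratedDeriv 4 u y) + ((4*(0)*y^3 + 3*(0)*y^2 + 2*(0)*y + ((10) + (4)*e6 + (4)*e5 + (1)*e5*e6)) * iteratedDeriv 2 u y + ((0)*y^4 + (0)*y^3 + (0)*y^2 + ((10) + (4)*e6 + (4)*e5 + (1)*e5*e6)*y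 + ((-8) + (-5/2)*e6 + (1/2)*e6^2 + (-2)*e5 + (-1/2)*e5*e6 + (1/2)*e3*e6 + (3/2)*e1 + (1)*e1*e6 + (1/2)*e1*e5 + (1/2)*e1*e3 + (1/2)*e1^2)) * iteratedDeriv 3 u y) + ((4*(0)*y^3 + 3*(0)*y^2 + 2*(0)*y + (0)) * deriv u y + ((0)*y^4 + (0)*y^3 + (0)*y^2 + (0)*y + ((2) + (2)*e6 + (2)*e5 + (2)*e5*e6)) * iteratedDeriv 2 u y)) y :=
      ((((hasDerivAt_term (0) ((1)) ((-2)) ((1)) (0) (hd4 y hy) rfl).add (hasDerivAt_term (0) (0) ((7) + (1)*e6 + (1)*e5) ((-10) + (-1)*e6 + (-1)*e5 + (1)*e1) ((3) + (-1)*e1) (hd3 y hy) rfl)).add (hasDerivAt_term (0) (0) (0) ((10) + (4)*e6 + (4)*e5 + (1)*e5*e6) ((-8) + (-5/2)*e6 + (1/2)*e6^2 + (-2)*e5 + (-1/2)*e5*e6 + (1/2)*e3*e6 + (3/2)*e1 + (1)*e1*e6 + (1/2)*e1*e5 + (1/2)*e1*e3 + (1/2)*e1^2) (hd2 y hy) rfl)).add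 (hasDerivAt_term (0) (0) (0) (0) ((2) + (2)*e6 + (2)*e5 + (2)*e5*e6) (hd1 y hy) rfl))
    refine hcan.congr_of_eventuallyEq ?_
    filter_upwards [hU.mem_nhds hy] with z hz
    have hz1 := (hP2 z hz).deriv
    beta_reduce
    rw [hz1]; ring
  have hEfun : E3fop e1 e3 e5 e6 u = fun y : ℂ => (((1))*y^4 + ((-2))*y^3 + ((1))*y^2 + (0)*y + (0)) * (iteratedDeriv 3 u y) + ((0)*y^4 + ((4) + (2)*e5 + (-1)*e3)*y^3 + ((-6) + (-3)*e5)*y^2 + ((2) + (1)*e5 + (1)*e3)*y + (0)) * (iteratedDeriv 2 u y) + ((0)*y^4 + (0)*y^3 + ((2) + (1)*e6 + (-1)*e6^2 + (3)*e5 + (1)*e5*e6 + (1)*e5^2 + (-1)*e3 + (-1)*e3*e6 + (-1)*e3*e5)*y^2 + ((-2) + (-1)*e6 + (1)*e6^2 + (-3)*e5 + (-1)*e5*e6 + (-1)*e5^2 + (-1)*e3 + (1)*e3*e6 + (1)*e3^2 + (-1)*e1 + (1)*e1*e5 + (1)*e1*e3 + (1)*e1^2)*y + ((1)*e5 + (1)*e3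 + (1)*e1 + (-1)*e1*e5 + (-1)*e1*e3 + (-1)*e1^2)) * (deriv u y) + ((0)*y^4 + (0)*y^3 + (0)*y^2 + ((1)*e5*e6 + (-1)*e5*e6^2 + (1)*e5^2*e6 + (-1)*e3*e5*e6)*y + ((-1/2)*e5*e6 + (1/2)*e5*e6^2 + (-1/2)*e5^2*e6 + (-1/2)*e3*e6 + (1/2)*e3*e6^2 + (1/2)*e3^2*e6 + (-1/2)*e1*e5 + (1/2)*e1*e5^2 + (1/2)*e1*e3 + (-1/2)*e1*e3^2 + (1/2)*e1^2*e5 + (-1/2)*e1^2*e3)) * (u y) := by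
    funext y; simp only [E3fop, E3op, E3c3, E3c2, E3c1, E3c0, A00]; ring
  have hE1 : ∀ y ∈ U, HasDerivAt (E3fop e1 e3 e5 e6 u)
      (((4*((1))*y^3 + 3*((-2))*y^2 + 2*((1))*y + (0)) * iteratedDeriv 3 u y + (((1))*y^4 + ((-2))*y^3 + ((1))*y^2 + (0)*y + (0)) * iteratedDeriv 4 u y) + ((4*(0)*y^3 + 3*((4) + (2)*e5 + (-1)*e3)*y^2 + 2*((-6) + (-3)*e5)*y + ((2) + (1)*e5 + (1)*e3)) * iteratedDeriv 2 u y + ((0)*y^4 + ((4) + (2)*e5 + (-1)*e3)*y^3 + ((-6) + (-3)*e5)*y^2 + ((2) + (1)*e5 + (1)*e3)*y + (0)) * iteratedDeriv 3 u y) + ((4*(0)*y^3 + 3*(0)*y^2 + 2*((2) + (1)*e6 + (-1)*e6^2 + (3)*e5 + (1)*e5*e6 + (1)*e5^2 + (-1)*e3 + (-1)*e3*e6 + (-1)*e3*e5)*y + ((-2) + (-1)*e6 + (1)*e6^2 + (-3)*e5 + (-1)*e5*e6 + (-1)*e5^2 + (-1)*e3 + (1)*e3*e6 + (1)*e3^2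 + (-1)*e1 + (1)*e1*e5 + (1)*e1*e3 + (1)*e1^2)) * deriv u y + ((0)*y^4 + (0)*y^3 + ((2) + (1)*e6 + (-1)*e6^2 + (3)*e5 + (1)*e5*e6 + (1)*e5^2 + (-1)*e3 + (-1)*e3*e6 + (-1)*e3*e5)*y^2 + ((-2) + (-1)*e6 + (1)*e6^2 + (-3)*e5 + (-1)*e5*e6 + (-1)*e5^2 + (-1)*e3 + (1)*e3*e6 + (1)*e3^2 + (-1)*e1 + (1)*e1*e5 + (1)*e1*e3 + (1)*e1^2)*y + ((1)*e5 + (1)*e3 + (1)*e1 + (-1)*e1*e5 + (-1)*e1*e3 + (-1)*e1^2)) * iteratedDeriv 2 u y) + ((4*(0)*y^3 + 3*(0)*y^2 + 2*(0)*y + ((1)*e5*e6 + (-1)*e5*e6^2 + (1)*e5^2*e6 + (-1)*e3*e5*e6)) * u y + ((0)*y^4 + (0)*y^3 + (0)*y^2 + ((1)*e5*e6 + (-1)*e5*e6^2 + (1)*e5^2*e6 + (-1)*e3*e5*e6)*y + ((-1/2)*e5*e6 + (1/2)*e5*e6^2 + (-1/2)*e5^2*e6 + (-1/2)*e3*e6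 + (1/2)*e3*e6^2 + (1/2)*e3^2*e6 + (-1/2)*e1*e5 + (1/2)*e1*e5^2 + (1/2)*e1*e3 + (-1/2)*e1*e3^2 + (1/2)*e1^2*e5 + (-1/2)*e1^2*e3)) * deriv u y)) y := by
    intro y hy
    rw [hEfun]
    exact ((((hasDerivAt_term ((1)) ((-2)) ((1)) (0) (0) (hd3 y hy) rfl).add (hasDerivAt_term (0) ((4) + (2)*e5 + (-1)*e3) ((-6) + (-3)*e5) ((2) + (1)*e5 + (1)*e3) (0) (hd2 y hy) rfl)).add (hasDerivAt_term (0) (0) ((2) + (1)*e6 + (-1)*e6^2 + (3)*e5 + (1)*e5*e6 + (1)*e5^2 + (-1)*e3 + (-1)*e3*e6 + (-1)*e3*e5) ((-2) + (-1)*e6 + (1)*e6^2 + (-3)*e5 + (-1)*e5*e6 + (-1)*e5^2 + (-1)*e3 + (1)*e3*e6 + (1)*e3^2 + (-1)*e1 + (1)*e1*e5 + (1)*e1*e3 + (1)*e1^2) ((1)*e5 + (1)*e3 + (1)*e1 + (-1)*e1*e5 + (-1)*e1*e3 + (-1)*e1^2) (hd1 y hy) rfl)).add (hasDerivAt_term (0)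 (0) (0) ((1)*e5*e6 + (-1)*e5*e6^2 + (1)*e5^2*e6 + (-1)*e3*e5*e6) ((-1/2)*e5*e6 + (1/2)*e5*e6^2 + (-1/2)*e5^2*e6 + (-1/2)*e3*e6 + (1/2)*e3*e6^2 + (1/2)*e3^2*e6 + (-1/2)*e1*e5 + (1/2)*e1*e5^2 + (1/2)*e1*e3 + (-1/2)*e1*e3^2 + (1/2)*e1^2*e5 + (-1/2)*e1^2*e3) (hd0 y hy) rfl))
  have hE2 : ∀ y ∈ U, HasDerivAt (deriv (E3fop e1 e3 e5 e6 u))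
      (((4*((1))*y^3 + 3*((-2))*y^2 + 2*((1))*y + (0)) * iteratedDeriv 4 u y + (((1))*y^4 + ((-2))*y^3 + ((1))*y^2 + (0)*y + (0)) * iteratedDeriv 5 u y) + ((4*(0)*y^3 + 3*((8) + (2)*e5 + (-1)*e3)*y^2 + 2*((-12) + (-3)*e5)*y + ((4) + (1)*e5 + (1)*e3)) * iteratedDeriv 3 u y + ((0)*y^4 + ((8) + (2)*e5 + (-1)*e3)*y^3 + ((-12) + (-3)*e5)*y^2 + ((4) + (1)*e5 + (1)*e3)*y + (0)) * iteratedDeriv 4 u y) + ((4*(0)*y^3 + 3*(0)*y^2 + 2*((14) + (1)*e6 + (-1)*e6^2 + (9)*e5 + (1)*e5*e6 + (1)*e5^2 + (-4)*e3 + (-1)*e3*e6 + (-1)*e3*e5)*y + ((-14) + (-1)*e6 + (1)*e6^2 + (-9)*e5 + (-1)*e5*e6 + (-1)*e5^2 + (-1)*e3 + (1)*e3*e6 + (1)*e3^2 + (-1)*e1 + (1)*e1*e5 + (1)*e1*e3 + (1)*e1^2)) * iteratedDeriv 2 u y + ((0)*y^4 + (0)*y^3 + ((14) + (1)*e6 +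 (-1)*e6^2 + (9)*e5 + (1)*e5*e6 + (1)*e5^2 + (-4)*e3 + (-1)*e3*e6 + (-1)*e3*e5)*y^2 + ((-14) + (-1)*e6 + (1)*e6^2 + (-9)*e5 + (-1)*e5*e6 + (-1)*e5^2 + (-1)*e3 + (1)*e3*e6 + (1)*e3^2 + (-1)*e1 + (1)*e1*e5 + (1)*e1*e3 + (1)*e1^2)*y + ((2) + (2)*e5 + (2)*e3 + (1)*e1 + (-1)*e1*e5 + (-1)*e1*e3 + (-1)*e1^2)) * iteratedDeriv 3 u y) + ((4*(0)*y^3 + 3*(0)*y^2 + 2*(0)*y + ((4) + (2)*e6 + (-2)*e6^2 + (6)*e5 + (3)*e5*e6 + (-1)*e5*e6^2 + (2)*e5^2 + (1)*e5^2*e6 + (-2)*e3 + (-2)*e3*e6 + (-2)*e3*e5 + (-1)*e3*e5*e6)) * deriv u y + ((0)*y^4 + (0)*y^3 + (0)*y^2 + ((4) + (2)*e6 + (-2)*e6^2 + (6)*e5 + (3)*e5*e6 + (-1)*e5*e6^2 + (2)*e5^2 + (1)*e5^2*e6 + (-2)*e3 + (-2)*e3*e6 + (-2)*e3*e5 + (-1)*e3*e5*e6)*y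 + ((-2) + (-1)*e6 + (1)*e6^2 + (-3)*e5 + (-3/2)*e5*e6 + (1/2)*e5*e6^2 + (-1)*e5^2 + (-1/2)*e5^2*e6 + (-1)*e3 + (1/2)*e3*e6 + (1/2)*e3*e6^2 + (1)*e3^2 + (1/2)*e3^2*e6 + (-1)*e1 + (1/2)*e1*e5 + (1/2)*e1*e5^2 + (3/2)*e1*e3 + (-1/2)*e1*e3^2 + (1)*e1^2 + (1/2)*e1^2*e5 + (-1/2)*e1^2*e3)) * iteratedDeriv 2 u y) + ((4*(0)*y^3 + 3*(0)*y^2 + 2*(0)*y + (0)) * u y + ((0)*y^4 + (0)*y^3 + (0)*y^2 + (0)*y + ((1)*e5*e6 + (-1)*e5*e6^2 + (1)*e5^2*e6 + (-1)*e3*e5*e6)) * deriv u y)) y := by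
    intro y hy
    have hcan : HasDerivAt (fun t : ℂ => (((1))*t^4 + ((-2))*t^3 + ((1))*t^2 + (0)*t + (0)) * (iteratedDeriv 4 u t) + ((0)*t^4 + ((8) + (2)*e5 + (-1)*e3)*t^3 + ((-12) + (-3)*e5)*t^2 + ((4) + (1)*e5 + (1)*e3)*t + (0)) * (iteratedDeriv 3 u t) + ((0)*t^4 + (0)*t^3 + ((14) + (1)*e6 + (-1)*e6^2 + (9)*e5 + (1)*e5*e6 + (1)*e5^2 + (-4)*e3 + (-1)*e3*e6 + (-1)*e3*e5)*t^2 + ((-14) + (-1)*e6 + (1)*e6^2 + (-9)*e5 + (-1)*e5*e6 + (-1)*e5^2 + (-1)*e3 + (1)*e3*e6 + (1)*e3^2 + (-1)*e1 + (1)*e1*e5 + (1)*e1*e3 + (1)*e1^2)*t + ((2) + (2)*e5 + (2)*e3 + (1)*e1 + (-1)*e1*e5 + (-1)*e1*e3 + (-1)*e1^2)) * (iteratedDeriv 2 u t) + ((0)*t^4 + (0)*t^3 + (0)*t^2 + ((4) + (2)*e6 + (-2)*e6^2 + (6)*e5 + (3)*e5*e6 + (-1)*e5*e6^2 + (2)*e5^2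 + (1)*e5^2*e6 + (-2)*e3 + (-2)*e3*e6 + (-2)*e3*e5 + (-1)*e3*e5*e6)*t + ((-2) + (-1)*e6 + (1)*e6^2 + (-3)*e5 + (-3/2)*e5*e6 + (1/2)*e5*e6^2 + (-1)*e5^2 + (-1/2)*e5^2*e6 + (-1)*e3 + (1/2)*e3*e6 + (1/2)*e3*e6^2 + (1)*e3^2 + (1/2)*e3^2*e6 + (-1)*e1 + (1/2)*e1*e5 + (1/2)*e1*e5^2 + (3/2)*e1*e3 + (-1/2)*e1*e3^2 + (1)*e1^2 + (1/2)*e1^2*e5 + (-1/2)*e1^2*e3)) * (deriv u t) + ((0)*t^4 + (0)*t^3 + (0)*t^2 + (0)*t + ((1)*e5*e6 + (-1)*e5*e6^2 + (1)*e5^2*e6 + (-1)*e3*e5*e6)) * (u t))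
      (((4*((1))*y^3 + 3*((-2))*y^2 + 2*((1))*y + (0)) * iteratedDeriv 4 u y + (((1))*y^4 + ((-2))*y^3 + ((1))*y^2 + (0)*y + (0)) * iteratedDeriv 5 u y) + ((4*(0)*y^3 + 3*((8) + (2)*e5 + (-1)*e3)*y^2 + 2*((-12) + (-3)*e5)*y + ((4) + (1)*e5 + (1)*e3)) * iteratedDeriv 3 u y + ((0)*y^4 + ((8) + (2)*e5 + (-1)*e3)*y^3 + ((-12) + (-3)*e5)*y^2 + ((4) + (1)*e5 + (1)*e3)*y + (0)) * iteratedDeriv 4 u y) + ((4*(0)*y^3 + 3*(0)*y^2 + 2*((14) + (1)*e6 + (-1)*e6^2 + (9)*e5 + (1)*e5*e6 + (1)*e5^2 + (-4)*e3 + (-1)*e3*e6 + (-1)*e3*e5)*y + ((-14) + (-1)*e6 + (1)*e6^2 + (-9)*e5 + (-1)*e5*e6 + (-1)*e5^2 + (-1)*e3 + (1)*e3*e6 + (1)*e3^2 + (-1)*e1 + (1)*e1*e5 + (1)*e1*e3 + (1)*e1^2)) * iteratedDeriv 2 u y + ((0)*y^4 + (0)*y^3 + ((14) + (1)*e6 +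 (-1)*e6^2 + (9)*e5 + (1)*e5*e6 + (1)*e5^2 + (-4)*e3 + (-1)*e3*e6 + (-1)*e3*e5)*y^2 + ((-14) + (-1)*e6 + (1)*e6^2 + (-9)*e5 + (-1)*e5*e6 + (-1)*e5^2 + (-1)*e3 + (1)*e3*e6 + (1)*e3^2 + (-1)*e1 + (1)*e1*e5 + (1)*e1*e3 + (1)*e1^2)*y + ((2) + (2)*e5 + (2)*e3 + (1)*e1 + (-1)*e1*e5 + (-1)*e1*e3 + (-1)*e1^2)) * iteratedDeriv 3 u y) + ((4*(0)*y^3 + 3*(0)*y^2 + 2*(0)*y + ((4) + (2)*e6 + (-2)*e6^2 + (6)*e5 + (3)*e5*e6 + (-1)*e5*e6^2 + (2)*e5^2 + (1)*e5^2*e6 + (-2)*e3 + (-2)*e3*e6 + (-2)*e3*e5 + (-1)*e3*e5*e6)) * deriv u y + ((0)*y^4 + (0)*y^3 + (0)*y^2 + ((4) + (2)*e6 + (-2)*e6^2 + (6)*e5 + (3)*e5*e6 + (-1)*e5*e6^2 + (2)*e5^2 + (1)*e5^2*e6 + (-2)*e3 + (-2)*e3*e6 + (-2)*e3*e5 + (-1)*e3*e5*e6)*y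 + ((-2) + (-1)*e6 + (1)*e6^2 + (-3)*e5 + (-3/2)*e5*e6 + (1/2)*e5*e6^2 + (-1)*e5^2 + (-1/2)*e5^2*e6 + (-1)*e3 + (1/2)*e3*e6 + (1/2)*e3*e6^2 + (1)*e3^2 + (1/2)*e3^2*e6 + (-1)*e1 + (1/2)*e1*e5 + (1/2)*e1*e5^2 + (3/2)*e1*e3 + (-1/2)*e1*e3^2 + (1)*e1^2 + (1/2)*e1^2*e5 + (-1/2)*e1^2*e3)) * iteratedDeriv 2 u y) + ((4*(0)*y^3 + 3*(0)*y^2 + 2*(0)*y + (0)) * u y + ((0)*y^4 + (0)*y^3 + (0)*y^2 + (0)*y + ((1)*e5*e6 + (-1)*e5*e6^2 + (1)*e5^2*e6 + (-1)*e3*e5*e6)) * deriv u y)) y :=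
      (((((hasDerivAt_term ((1)) ((-2)) ((1)) (0) (0) (hd4 y hy) rfl).add (hasDerivAt_term (0) ((8) + (2)*e5 + (-1)*e3) ((-12) + (-3)*e5) ((4) + (1)*e5 + (1)*e3) (0) (hd3 y hy) rfl)).add (hasDerivAt_term (0) (0) ((14) + (1)*e6 + (-1)*e6^2 + (9)*e5 + (1)*e5*e6 + (1)*e5^2 + (-4)*e3 + (-1)*e3*e6 + (-1)*e3*e5) ((-14) + (-1)*e6 + (1)*e6^2 + (-9)*e5 + (-1)*e5*e6 + (-1)*e5^2 + (-1)*e3 + (1)*e3*e6 + (1)*e3^2 + (-1)*e1 + (1)*e1*e5 + (1)*e1*e3 + (1)*e1^2) ((2) + (2)*e5 + (2)*e3 + (1)*e1 + (-1)*e1*e5 + (-1)*e1*e3 + (-1)*e1^2) (hd2 y hy) rfl)).add (hasDerivAt_term (0) (0) (0) ((4) + (2)*e6 + (-2)*e6^2 + (6)*e5 + (3)*e5*e6 + (-1)*e5*e6^2 + (2)*e5^2 + (1)*e5^2*e6 + (-2)*e3 + (-2)*e3*e6 + (-2)*e3*e5 + (-1)*e3*e5*e6) ((-2) + (-1)*e6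 + (1)*e6^2 + (-3)*e5 + (-3/2)*e5*e6 + (1/2)*e5*e6^2 + (-1)*e5^2 + (-1/2)*e5^2*e6 + (-1)*e3 + (1/2)*e3*e6 + (1/2)*e3*e6^2 + (1)*e3^2 + (1/2)*e3^2*e6 + (-1)*e1 + (1/2)*e1*e5 + (1/2)*e1*e5^2 + (3/2)*e1*e3 + (-1/2)*e1*e3^2 + (1)*e1^2 + (1/2)*e1^2*e5 + (-1/2)*e1^2*e3) (hd1 y hy) rfl)).add (hasDerivAt_term (0) (0) (0) (0) ((1)*e5*e6 + (-1)*e5*e6^2 + (1)*e5^2*e6 + (-1)*e3*e5*e6) (hd0 y hy) rfl))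
    refine hcan.congr_of_eventuallyEq ?_
    filter_upwards [hU.mem_nhds hy] with z hz
    have hz1 := (hE1 z hz).deriv
    beta_reduce
    rw [hz1]; ring
  have v1 : deriv (Pf e1 e3 e5 e6 u) x = ((4*(0)*x^3 + 3*((1))*x^2 + 2*((-2))*x + ((1))) * iteratedDeriv 2 u x + ((0)*x^4 + ((1))*x^3 + ((-2))*x^2 + ((1))*x + (0)) * iteratedDeriv 3 u x) + ((4*(0)*x^3 + 3*(0)*x^2 + 2*((1) + (1)*e6 + (1)*e5)*x + ((-2) + (-1)*e6 + (-1)*e5 + (1)*e1)) * deriv u x + ((0)*x^4 + (0)*x^3 + ((1) + (1)*e6 + (1)*e5)*x^2 + ((-2) + (-1)*e6 + (-1)*e5 + (1)*e1)*x + ((1) + (-1)*e1)) * iteratedDeriv 2 u x) + ((4*(0)*x^3 + 3*(0)*x^2 + 2*(0)*x + ((1)*e5*e6)) * u x + ((0)*x^4 + (0)*x^3 + (0)*x^2 + ((1)*e5*e6)*x + ((-1/2)*e6 + (1/2)*e6^2 + (-1/2)*e5*e6 + (1/2)*e3*e6 + (-1/2)*e1 + (1)*e1*e6 + (1/2)*e1*e5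 + (1/2)*e1*e3 + (1/2)*e1^2)) * deriv u x) := (hP1 x hx).deriv
  have v2 : iteratedDeriv 2 (Pf e1 e3 e5 e6 u) x = ((4*(0)*x^3 + 3*((1))*x^2 + 2*((-2))*x + ((1))) * iteratedDeriv 3 u x + ((0)*x^4 + ((1))*x^3 + ((-2))*x^2 + ((1))*x + (0)) * iteratedDeriv 4 u x) + ((4*(0)*x^3 + 3*(0)*x^2 + 2*((4) + (1)*e6 + (1)*e5)*x + ((-6) + (-1)*e6 + (-1)*e5 + (1)*e1)) * iteratedDeriv 2 u x + ((0)*x^4 + (0)*x^3 + ((4) + (1)*e6 + (1)*e5)*x^2 + ((-6) + (-1)*e6 + (-1)*e5 + (1)*e1)*x + ((2) + (-1)*e1)) * iteratedDeriv 3 u x) + ((4*(0)*x^3 + 3*(0)*x^2 + 2*(0)*x + ((2) + (2)*e6 + (2)*e5 + (1)*e5*e6)) * deriv u x + ((0)*x^4 + (0)*x^3 + (0)*x^2 + ((2) + (2)*e6 + (2)*e5 + (1)*e5*e6)*x + ((-2) + (-3/2)*e6 + (1/2)*e6^2 + (-1)*e5 + (-1/2)*e5*e6 + (1/2)*e3*e6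 + (1/2)*e1 + (1)*e1*e6 + (1/2)*e1*e5 + (1/2)*e1*e3 + (1/2)*e1^2)) * iteratedDeriv 2 u x) + ((4*(0)*x^3 + 3*(0)*x^2 + 2*(0)*x + (0)) * u x + ((0)*x^4 + (0)*x^3 + (0)*x^2 + (0)*x + ((1)*e5*e6)) * deriv u x) := by
    rw [itd2_eq]; exact (hP2 x hx).deriv
  have v3 : iteratedDeriv 3 (Pf e1 e3 e5 e6 u) x = ((4*(0)*x^3 + 3*((1))*x^2 + 2*((-2))*x + ((1))) * iteratedDeriv 4 u x + ((0)*x^4 + ((1))*x^3 + ((-2))*x^2 + ((1))*x + (0)) * iteratedDeriv 5 u x) + ((4*(0)*x^3 + 3*(0)*x^2 + 2*((7) + (1)*e6 + (1)*e5)*x + ((-10) + (-1)*e6 + (-1)*e5 + (1)*e1)) * iteratedDeriv 3 u x + ((0)*x^4 + (0)*x^3 + ((7) + (1)*e6 + (1)*e5)*x^2 + ((-10) + (-1)*e6 + (-1)*e5 + (1)*e1)*x + ((3) + (-1)*e1)) * iteratedDeriv 4 u x) + ((4*(0)*x^3 + 3*(0)*x^2 + 2*(0)*x + ((10) + (4)*e6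 + (4)*e5 + (1)*e5*e6)) * iteratedDeriv 2 u x + ((0)*x^4 + (0)*x^3 + (0)*x^2 + ((10) + (4)*e6 + (4)*e5 + (1)*e5*e6)*x + ((-8) + (-5/2)*e6 + (1/2)*e6^2 + (-2)*e5 + (-1/2)*e5*e6 + (1/2)*e3*e6 + (3/2)*e1 + (1)*e1*e6 + (1/2)*e1*e5 + (1/2)*e1*e3 + (1/2)*e1^2)) * iteratedDeriv 3 u x) + ((4*(0)*x^3 + 3*(0)*x^2 + 2*(0)*x + (0)) * deriv u x + ((0)*x^4 + (0)*x^3 + (0)*x^2 + (0)*x + ((2) + (2)*e6 + (2)*e5 + (2)*e5*e6)) * iteratedDeriv 2 u x) := by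
    rw [itd3_eq]; exact (hP3 x hx).deriv
  have w1 : deriv (E3fop e1 e3 e5 e6 u) x = ((4*((1))*x^3 + 3*((-2))*x^2 + 2*((1))*x + (0)) * iteratedDeriv 3 u x + (((1))*x^4 + ((-2))*x^3 + ((1))*x^2 + (0)*x + (0)) * iteratedDeriv 4 u x) + ((4*(0)*x^3 + 3*((4) + (2)*e5 + (-1)*e3)*x^2 + 2*((-6) + (-3)*e5)*x + ((2) + (1)*e5 + (1)*e3)) * iteratedDeriv 2 u x + ((0)*x^4 + ((4) + (2)*e5 + (-1)*e3)*x^3 + ((-6) + (-3)*e5)*x^2 + ((2) + (1)*e5 + (1)*e3)*x + (0)) * iteratedDeriv 3 u x) + ((4*(0)*x^3 + 3*(0)*x^2 + 2*((2) + (1)*e6 + (-1)*e6^2 + (3)*e5 + (1)*e5*e6 + (1)*e5^2 + (-1)*e3 + (-1)*e3*e6 + (-1)*e3*e5)*x + ((-2) + (-1)*e6 + (1)*e6^2 + (-3)*e5 + (-1)*e5*e6 + (-1)*e5^2 + (-1)*e3 + (1)*e3*e6 + (1)*e3^2 + (-1)*e1 + (1)*e1*e5 + (1)*e1*e3 + (1)*e1^2))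 * deriv u x + ((0)*x^4 + (0)*x^3 + ((2) + (1)*e6 + (-1)*e6^2 + (3)*e5 + (1)*e5*e6 + (1)*e5^2 + (-1)*e3 + (-1)*e3*e6 + (-1)*e3*e5)*x^2 + ((-2) + (-1)*e6 + (1)*e6^2 + (-3)*e5 + (-1)*e5*e6 + (-1)*e5^2 + (-1)*e3 + (1)*e3*e6 + (1)*e3^2 + (-1)*e1 + (1)*e1*e5 + (1)*e1*e3 + (1)*e1^2)*x + ((1)*e5 + (1)*e3 + (1)*e1 + (-1)*e1*e5 + (-1)*e1*e3 + (-1)*e1^2)) * iteratedDeriv 2 u x) + ((4*(0)*x^3 + 3*(0)*x^2 + 2*(0)*x + ((1)*e5*e6 + (-1)*e5*e6^2 + (1)*e5^2*e6 + (-1)*e3*e5*e6)) * u x + ((0)*x^4 + (0)*x^3 + (0)*x^2 + ((1)*e5*e6 + (-1)*e5*e6^2 + (1)*e5^2*e6 + (-1)*e3*e5*e6)*x + ((-1/2)*e5*e6 + (1/2)*e5*e6^2 + (-1/2)*e5^2*e6 + (-1/2)*e3*e6 + (1/2)*e3*e6^2 + (1/2)*e3^2*e6 + (-1/2)*e1*e5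 + (1/2)*e1*e5^2 + (1/2)*e1*e3 + (-1/2)*e1*e3^2 + (1/2)*e1^2*e5 + (-1/2)*e1^2*e3)) * deriv u x) := (hE1 x hx).deriv
  have w2 : iteratedDeriv 2 (E3fop e1 e3 e5 e6 u) x = ((4*((1))*x^3 + 3*((-2))*x^2 + 2*((1))*x + (0)) * iteratedDeriv 4 u x + (((1))*x^4 + ((-2))*x^3 + ((1))*x^2 + (0)*x + (0)) * iteratedDeriv 5 u x) + ((4*(0)*x^3 + 3*((8) + (2)*e5 + (-1)*e3)*x^2 + 2*((-12) + (-3)*e5)*x + ((4) + (1)*e5 + (1)*e3)) * iteratedDeriv 3 u x + ((0)*x^4 + ((8) + (2)*e5 + (-1)*e3)*x^3 + ((-12) + (-3)*e5)*x^2 + ((4) + (1)*e5 + (1)*e3)*x + (0)) * iteratedDeriv 4 u x) + ((4*(0)*x^3 + 3*(0)*x^2 + 2*((14) + (1)*e6 + (-1)*e6^2 + (9)*e5 + (1)*e5*e6 + (1)*e5^2 + (-4)*e3 + (-1)*e3*e6 + (-1)*e3*e5)*x + ((-14) + (-1)*e6 + (1)*e6^2 + (-9)*e5 + (-1)*e5*e6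 + (-1)*e5^2 + (-1)*e3 + (1)*e3*e6 + (1)*e3^2 + (-1)*e1 + (1)*e1*e5 + (1)*e1*e3 + (1)*e1^2)) * iteratedDeriv 2 u x + ((0)*x^4 + (0)*x^3 + ((14) + (1)*e6 + (-1)*e6^2 + (9)*e5 + (1)*e5*e6 + (1)*e5^2 + (-4)*e3 + (-1)*e3*e6 + (-1)*e3*e5)*x^2 + ((-14) + (-1)*e6 + (1)*e6^2 + (-9)*e5 + (-1)*e5*e6 + (-1)*e5^2 + (-1)*e3 + (1)*e3*e6 + (1)*e3^2 + (-1)*e1 + (1)*e1*e5 + (1)*e1*e3 + (1)*e1^2)*x + ((2) + (2)*e5 + (2)*e3 + (1)*e1 + (-1)*e1*e5 + (-1)*e1*e3 + (-1)*e1^2)) * iteratedDeriv 3 u x) + ((4*(0)*x^3 + 3*(0)*x^2 + 2*(0)*x + ((4) + (2)*e6 + (-2)*e6^2 + (6)*e5 + (3)*e5*e6 + (-1)*e5*e6^2 + (2)*e5^2 + (1)*e5^2*e6 + (-2)*e3 + (-2)*e3*e6 + (-2)*e3*e5 + (-1)*e3*e5*e6)) * deriv u x + ((0)*x^4 + (0)*x^3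 + (0)*x^2 + ((4) + (2)*e6 + (-2)*e6^2 + (6)*e5 + (3)*e5*e6 + (-1)*e5*e6^2 + (2)*e5^2 + (1)*e5^2*e6 + (-2)*e3 + (-2)*e3*e6 + (-2)*e3*e5 + (-1)*e3*e5*e6)*x + ((-2) + (-1)*e6 + (1)*e6^2 + (-3)*e5 + (-3/2)*e5*e6 + (1/2)*e5*e6^2 + (-1)*e5^2 + (-1/2)*e5^2*e6 + (-1)*e3 + (1/2)*e3*e6 + (1/2)*e3*e6^2 + (1)*e3^2 + (1/2)*e3^2*e6 + (-1)*e1 + (1/2)*e1*e5 + (1/2)*e1*e5^2 + (3/2)*e1*e3 + (-1/2)*e1*e3^2 + (1)*e1^2 + (1/2)*e1^2*e5 + (-1/2)*e1^2*e3)) * iteratedDeriv 2 u x) + ((4*(0)*x^3 + 3*(0)*x^2 + 2*(0)*x + (0)) * u x + ((0)*x^4 + (0)*x^3 + (0)*x^2 + (0)*x + ((1)*e5*e6 + (-1)*e5*e6^2 + (1)*e5^2*e6 + (-1)*e3*e5*e6)) * deriv u x) := by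
    rw [itd2_eq]; exact (hE2 x hx).deriv
  have hval : Pf e1 e3 e5 e6 u x = ((0)*x^4 + ((1))*x^3 + ((-2))*x^2 + ((1))*x + (0)) * (iteratedDeriv 2 u x) + ((0)*x^4 + (0)*x^3 + ((1) + (1)*e6 + (1)*e5)*x^2 + ((-2) + (-1)*e6 + (-1)*e5 + (1)*e1)*x + ((1) + (-1)*e1)) * (deriv u x) + ((0)*x^4 + (0)*x^3 + (0)*x^2 + ((1)*e5*e6)*x + ((-1/2)*e6 + (1/2)*e6^2 + (-1/2)*e5*e6 + (1/2)*e3*e6 + (-1/2)*e1 + (1)*e1*e6 + (1/2)*e1*e5 + (1/2)*e1*e3 + (1/2)*e1^2)) * (u x) := by rw [hPfun]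
  have heval : E3fop e1 e3 e5 e6 u x = (((1))*x^4 + ((-2))*x^3 + ((1))*x^2 + (0)*x + (0)) * (iteratedDeriv 3 u x) + ((0)*x^4 + ((4) + (2)*e5 + (-1)*e3)*x^3 + ((-6) + (-3)*e5)*x^2 + ((2) + (1)*e5 + (1)*e3)*x + (0)) * (iteratedDeriv 2 u x) + ((0)*x^4 + (0)*x^3 + ((2) + (1)*e6 + (-1)*e6^2 + (3)*e5 + (1)*e5*e6 + (1)*e5^2 + (-1)*e3 + (-1)*e3*e6 + (-1)*e3*e5)*x^2 + ((-2) + (-1)*e6 + (1)*e6^2 + (-3)*e5 + (-1)*e5*e6 + (-1)*e5^2 + (-1)*e3 + (1)*e3*e6 + (1)*e3^2 + (-1)*e1 + (1)*e1*e5 + (1)*e1*e3 + (1)*e1^2)*x + ((1)*e5 + (1)*e3 + (1)*e1 + (-1)*e1*e5 + (-1)*e1*e3 + (-1)*e1^2)) * (deriv u x) + ((0)*x^4 + (0)*x^3 + (0)*x^2 + ((1)*e5*e6 + (-1)*e5*e6^2 + (1)*e5^2*e6 + (-1)*e3*e5*e6)*x + ((-1/2)*e5*e6 + (1/2)*e5*e6^2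 + (-1/2)*e5^2*e6 + (-1/2)*e3*e6 + (1/2)*e3*e6^2 + (1/2)*e3^2*e6 + (-1/2)*e1*e5 + (1/2)*e1*e5^2 + (1/2)*e1*e3 + (-1/2)*e1*e3^2 + (1/2)*e1^2*e5 + (-1/2)*e1^2*e3)) * (u x) := by rw [hEfun]
  show E3c3 x * iteratedDeriv 3 (Pf e1 e3 e5 e6 u) x
      + E3c2 (e1+1) (-(e1+1) - e3 - e5 + 1) e3 (e3 - e5 + 1) e5 (e6+1) x * iteratedDeriv 2 (Pf e1 e3 e5 e6 u) x
      + E3c1 (e1+1) (-(e1+1) - e3 - e5 + 1) e3 (e3 - e5 + 1) e5 (e6+1) x * deriv (Pf e1 e3 e5 e6 u) x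
      + E3c0 (e1+1) (-(e1+1) - e3 - e5 + 1) e3 (e3 - e5 + 1) e5 (e6+1) x * (Pf e1 e3 e5 e6 u x)
    = Qf e1 e3 e5 e6 (E3fop e1 e3 e5 e6 u) x
  rw [v3, v2, v1, hval]
  show _ = x*(x - 1)^2 * iteratedDeriv 2 (E3fop e1 e3 e5 e6 u) x
      + (x - 1)*((e5 + e6 + 2)*x + e1) * deriv (E3fop e1 e3 e5 e6 u) x
      + ((e5*e6 + e5)*x + e1^2/2 + e1*e3/2 + e5*e1/2 + e6*e1 + e6*e3/2
          - e5*e6/2 + e6^2/2 + e1/2 + e6/2) * (E3fop e1 e3 e5 e6 u x)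
  rw [w2, w1, heval]
  simp only [E3c3, E3c2, E3c1, E3c0, A00]
  ring
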